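/- Let a be strongly degenerate at x₀ ∈ (0,1). Then H¹_{1/a}(0,1) = {u ∈ H¹_{1/a}(0,1) : u(x₀) = 0}, i.e. every u ∈ H¹(0,1) with ∫₀¹ u²/a dx < ∞ satisfies u(x₀) = 0; moreover, there exists C > 0 such that for all u ∈ H¹_{1/a}(0,1), ∫₀¹ u²/a dx + ∫₀¹ (u')² dx ≤ C ∫₀¹ (u')² dx (so the H¹_{1/a}-norm is equivalent to (∫₀¹ (u')² dx)^{1/2} on H¹_{1/a}(0,1)). -/

import Mathlib

open MeasureTheory Set Filter

noncomputable section

/-- Absolute continuity of `u` on `[c,d]`, encoded via the fundamental theorem of calculus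
with an integrable derivative. -/
def ACOn (u : ℝ → ℝ) (c d : ℝ) : Prop :=
  IntervalIntegrable (deriv u) volume c d ∧
    ∀ x ∈ Icc c d, u x = u c + ∫ t in c..x, deriv u t

/-- Membership in `H¹(0,1)`. -/
def MemH1 (u : ℝ → ℝ) : Prop :=
  ACOn u 0 1 ∧ IntegrableOn (fun x => (u x)^2) (Ioo 0 1) ∧
    IntegrableOn (fun x => (deriv u x)^2) (Ioo 0 1)

/-- `a ∈ W^{1,1}(0,1)`. -/
def W11 (a : ℝ → ℝ) : Prop := ACOn a 0 1

/-- `a ∈ W^{1,∞}(0,1)`. -/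
def W1infty (a : ℝ → ℝ) : Prop :=
  ACOn a 0 1 ∧ ∃ M : ℝ, ∀ᵐ x ∂(volume.restrict (Icc (0:ℝ) 1)), |deriv a x| ≤ M

/-- Common part of the degeneracy conditions at `x₀` with constant `K`. -/
def DegAt (a : ℝ → ℝ) (x₀ K : ℝ) : Prop :=
  x₀ ∈ Ioo (0:ℝ) 1 ∧ a x₀ = 0 ∧ (∀ x ∈ Icc (0:ℝ) 1, x ≠ x₀ → 0 < a x) ∧
    ∀ᵐ x ∂(volume.restrict (Icc (0:ℝ) 1)), (x - x₀) * deriv a x ≤ K * a x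

/-- `a` is weakly degenerate at `x₀` with constant `K`. -/
def WeaklyDeg (a : ℝ → ℝ) (x₀ K : ℝ) : Prop :=
  DegAt a x₀ K ∧ W11 a ∧ K ∈ Ioo (0:ℝ) 1

/-- `a` is strongly degenerate at `x₀` with constant `K`. -/
def StronglyDeg (a : ℝ → ℝ) (x₀ K : ℝ) : Prop :=
  DegAt a x₀ K ∧ W1infty a ∧ K ∈ Ico (1:ℝ) 2

/-- Weakly (`wk = true`) or strongly (`wk = false`) degenerate. -/
def Deg (a : ℝ → ℝ) (x₀ K : ℝ) (wk : Bool) : Prop :=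
  cond wk (WeaklyDeg a x₀ K) (StronglyDeg a x₀ K)

/-- `H¹_a(0,1)` in the weakly degenerate case: absolutely continuous on `[0,1]`
with `√a · u' ∈ L²(0,1)`. -/
def MemH1aWeak (a u : ℝ → ℝ) : Prop :=
  ACOn u 0 1 ∧ IntegrableOn (fun x => a x * (deriv u x)^2) (Ioo 0 1)

/-- Locally absolutely continuous on `[0,x₀) ∪ (x₀,1]`. -/
def LocACAway (u : ℝ → ℝ) (x₀ : ℝ) : Prop :=
  (∀ c d : ℝ, 0 ≤ c → c ≤ d → d < x₀ → ACOn u c d) ∧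
  (∀ c d : ℝ, x₀ < c → c ≤ d → d ≤ 1 → ACOn u c d)

/-- `H¹_a(0,1)` in the strongly degenerate case. -/
def MemH1aStrong (a u : ℝ → ℝ) (x₀ : ℝ) : Prop :=
  IntegrableOn (fun x => (u x)^2) (Ioo 0 1) ∧ LocACAway u x₀ ∧
    IntegrableOn (fun x => a x * (deriv u x)^2) (Ioo 0 1)

/-- `H¹_a(0,1)`, weak (`wk = true`) or strong (`wk = false`) version. -/
def MemH1a (a u : ℝ → ℝ) (x₀ : ℝ) (wk : Bool) : Prop :=
  cond wk (MemH1aWeak a u) (MemH1aStrong a u x₀)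

/-- `H²_a(0,1) = {u ∈ H¹_a(0,1) : a u' ∈ H¹(0,1)}`. -/
def MemH2a (a u : ℝ → ℝ) (x₀ : ℝ) (wk : Bool) : Prop :=
  MemH1a a u x₀ wk ∧ ACOn (fun x => a x * deriv u x) 0 1 ∧
    IntegrableOn (fun x => (deriv (fun y => a y * deriv u y) x)^2) (Ioo 0 1)

/-- `D(A₁) = {u ∈ H²_a(0,1) : u'(0) = u'(1) = 0}`. -/
def MemDA1 (a u : ℝ → ℝ) (x₀ : ℝ) (wk : Bool) : Prop :=
  MemH2a a u x₀ wk ∧ deriv u 0 = 0 ∧ deriv u 1 = 0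

/-- `L²_{1/a}(0,1)`. -/
def MemL2inva (a u : ℝ → ℝ) : Prop :=
  IntegrableOn (fun x => (u x)^2) (Ioo 0 1) ∧
    IntegrableOn (fun x => (u x)^2 / a x) (Ioo 0 1)

/-- `H¹_{1/a}(0,1) = L²_{1/a}(0,1) ∩ H¹(0,1)`. -/
def MemH1inva (a u : ℝ → ℝ) : Prop :=
  MemL2inva a u ∧ ACOn u 0 1 ∧ IntegrableOn (fun x => (deriv u x)^2) (Ioo 0 1)

/-- `H²_{1/a}(0,1) = {u ∈ H¹_{1/a}(0,1) : u' ∈ H¹(0,1)}` (then `a u'' ∈ L²_{1/a}`). -/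
def MemH2inva (a u : ℝ → ℝ) : Prop :=
  MemH1inva a u ∧ ACOn (deriv u) 0 1 ∧
    IntegrableOn (fun x => a x * (deriv (deriv u) x)^2) (Ioo 0 1)

/-- `D(A₂) = {u ∈ H²_{1/a}(0,1) : u'(0) = u'(1) = 0}`. -/
def MemDA2 (a u : ℝ → ℝ) : Prop :=
  MemH2inva a u ∧ deriv u 0 = 0 ∧ deriv u 1 = 0

/-- The time weight `Θ(t) = 1/(t(T-t))⁴`. -/
def Theta (T t : ℝ) : ℝ := 1 / (t * (T - t))^4

/-- The space weight `ψ(x) = c₁ (∫_{x₀}^x (y-x₀)/a(y) dy − c₂)`. -/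
def psiW (a : ℝ → ℝ) (x₀ c₁ c₂ x : ℝ) : ℝ :=
  c₁ * ((∫ y in x₀..x, (y - x₀) / a y) - c₂)

/-- The weight `φ(t,x) = Θ(t) ψ(x)`. -/
def phiW (a : ℝ → ℝ) (x₀ c₁ c₂ T t x : ℝ) : ℝ := Theta T t * psiW a x₀ c₁ c₂ x

/-- The space weight `μ(x) = d₁ (∫_{x₀}^x (y-x₀)e^{R(y-x₀)²}/a(y) dy − d₂)`. -/
def muW (a : ℝ → ℝ) (x₀ d₁ d₂ R x : ℝ) : ℝ :=
  d₁ * ((∫ y in x₀..x, (y - x₀) * Real.exp (R * (y - x₀)^2) / a y) - d₂)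

/-- The weight `γ(t,x) = Θ(t) μ(x)`. -/
def gammaW (a : ℝ → ℝ) (x₀ d₁ d₂ R T t x : ℝ) : ℝ := Theta T t * muW a x₀ d₁ d₂ R x

/-- Hypotheses (A) of the divergence-form Carleman estimate. -/
def HypA (a : ℝ → ℝ) (x₀ K : ℝ) (wk : Bool) : Prop :=
  cond wk
    (WeaklyDeg a x₀ K ∧ ContDiffOn ℝ 1 a (Icc 0 1 \ {x₀}))
    (StronglyDeg a x₀ K ∧
      (4/3 < K → ∃ ϑ, ϑ ∈ Ioc (0:ℝ) K ∧
        AntitoneOn (fun x => a x / |x - x₀| ^ ϑ) (Ico 0 x₀) ∧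
        MonotoneOn (fun x => a x / |x - x₀| ^ ϑ) (Ioc x₀ 1) ∧
        (3/2 < K →
          (∃ ε > 0, ∀ x ∈ Icc (0:ℝ) 1, x ≠ x₀ → ε ≤ a x / |x - x₀| ^ ϑ) ∧
          ∃ S > 0, ∀ᵐ x ∂(volume.restrict (Icc (0:ℝ) 1)),
            |deriv a x| ≤ S * |x - x₀| ^ (2*ϑ - 3))))

/-- Hypotheses (B) of the non-divergence-form Carleman estimate. -/
def HypB (a : ℝ → ℝ) (x₀ K : ℝ) (wk : Bool) : Prop :=
  Deg a x₀ K wk ∧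
  (∃ L : NNReal, LipschitzOnWith L (fun x => (x - x₀) * deriv a x / a x) (Icc 0 1)) ∧
  (1/2 ≤ K → ∃ ϑ, ϑ ∈ Ioc (0:ℝ) K ∧
      AntitoneOn (fun x => a x / |x - x₀| ^ ϑ) (Ico 0 x₀) ∧
      MonotoneOn (fun x => a x / |x - x₀| ^ ϑ) (Ioc x₀ 1))

/-- `g ∈ L^∞_loc([0,1] ∖ {x₀})`. -/
def LocBddAway (g : ℝ → ℝ) (x₀ : ℝ) : Prop :=
  ∀ c d : ℝ, Icc c d ⊆ Icc (0:ℝ) 1 \ {x₀} →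
    ∃ M : ℝ, ∀ x ∈ Icc c d, |g x| ≤ M

/-- `h ∈ W^{1,∞}_loc([0,1] ∖ {x₀}; L^∞(0,1))`. -/
def LocW1inftyAway (h : ℝ → ℝ → ℝ) (x₀ : ℝ) : Prop :=
  ∀ c d : ℝ, Icc c d ⊆ Icc (0:ℝ) 1 \ {x₀} →
    (∃ M : ℝ, ∀ x ∈ Icc c d, ∀ B ∈ Icc (0:ℝ) 1, |h x B| ≤ M) ∧
    ∃ L : NNReal, ∀ B ∈ Icc (0:ℝ) 1, LipschitzOnWith L (fun x => h x B) (Icc c d)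

/-- Hypothesis (O) (with `σ = -1`) resp. (O') (with `σ = 1`):
`σ (a'/(2√a))(∫ₓᴮ g + h₀) + √a g = h(x,B)` for a.e. `x` and all admissible `B`. -/
def HypOgen (σ : ℝ) (a g : ℝ → ℝ) (h : ℝ → ℝ → ℝ) (g₀ h₀ x₀ : ℝ) : Prop :=
  0 < g₀ ∧ 0 < h₀ ∧
  (∀ᵐ x ∂(volume.restrict (Icc (0:ℝ) 1)), g₀ ≤ g x) ∧
  LocBddAway g x₀ ∧ LocW1inftyAway h x₀ ∧
  ∀ᵐ x ∂(volume.restrict (Icc (0:ℝ) 1)), ∀ B ∈ Icc (0:ℝ) 1,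
    ((x < B ∧ B < x₀) ∨ (x₀ < x ∧ x < B)) →
      σ * (deriv a x / (2 * Real.sqrt (a x))) * ((∫ t in x..B, g t) + h₀)
        + Real.sqrt (a x) * g x = h x B

/-- The space-time cylinder `Q_T = (0,T) × (0,1)`. -/
def QT (T : ℝ) : Set (ℝ × ℝ) := Ioo 0 T ×ˢ Ioo (0:ℝ) 1

/-- The class `𝒱 = L²(0,T; D(A₁)) ∩ H¹(0,T; H¹_a(0,1))`. -/
def InClassV (a : ℝ → ℝ) (x₀ T : ℝ) (wk : Bool) (v : ℝ → ℝ → ℝ) : Prop :=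
  (∀ t ∈ Ioo (0:ℝ) T, MemDA1 a (v t) x₀ wk) ∧
  IntegrableOn (fun p : ℝ × ℝ =>
    (v p.1 p.2)^2 + a p.2 * (deriv (v p.1) p.2)^2
      + (deriv (fun y => a y * deriv (v p.1) y) p.2)^2) (QT T) ∧
  IntegrableOn (fun p : ℝ × ℝ =>
    (deriv (fun τ => v τ p.2) p.1)^2
      + a p.2 * (deriv (fun y => deriv (fun τ => v τ y) p.1) p.2)^2) (QT T)

/-- The class `𝒮 = H¹(0,T; H¹_{1/a}(0,1)) ∩ L²(0,T; H²_{1/a}(0,1))`. -/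
def InClassS (a : ℝ → ℝ) (T : ℝ) (v : ℝ → ℝ → ℝ) : Prop :=
  (∀ t ∈ Ioo (0:ℝ) T, MemH2inva a (v t)) ∧
  IntegrableOn (fun p : ℝ × ℝ =>
    (v p.1 p.2)^2 / a p.2 + (deriv (v p.1) p.2)^2
      + a p.2 * (deriv (deriv (v p.1)) p.2)^2) (QT T) ∧
  IntegrableOn (fun p : ℝ × ℝ =>
    (deriv (fun τ => v τ p.2) p.1)^2 / a p.2
      + (deriv (fun y => deriv (fun τ => v τ y) p.1) p.2)^2) (QT T)

/-- Neumann boundary conditions `v_x(t,0) = v_x(t,1) = 0` for `t ∈ (0,T)`. -/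
def NeumannBC (T : ℝ) (v : ℝ → ℝ → ℝ) : Prop :=
  ∀ t ∈ Ioo (0:ℝ) T, deriv (v t) 0 = 0 ∧ deriv (v t) 1 = 0

/-- The equation `v_t + (a v_x)_x = h` in `Q_T`. -/
def SolDiv (a : ℝ → ℝ) (T : ℝ) (v h : ℝ → ℝ → ℝ) : Prop :=
  ∀ t ∈ Ioo (0:ℝ) T, ∀ x ∈ Ioo (0:ℝ) 1,
    deriv (fun τ => v τ x) t + deriv (fun y => a y * deriv (v t) y) x = h t x

/-- The equation `v_t + a v_xx = h` in `Q_T`. -/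
def SolNonDiv (a : ℝ → ℝ) (T : ℝ) (v h : ℝ → ℝ → ℝ) : Prop :=
  ∀ t ∈ Ioo (0:ℝ) T, ∀ x ∈ Ioo (0:ℝ) 1,
    deriv (fun τ => v τ x) t + a x * deriv (deriv (v t)) x = h t x

/-- Test function class `H¹(0,T; L²(0,1)) ∩ L²(0,T; H¹_a(0,1))` for the weak formulation
in divergence form. -/
def TestClassDiv (a : ℝ → ℝ) (x₀ T : ℝ) (wk : Bool) (φ : ℝ → ℝ → ℝ) : Prop :=
  (∀ t ∈ Icc (0:ℝ) T, MemH1a a (φ t) x₀ wk) ∧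
  IntegrableOn (fun p : ℝ × ℝ =>
    (φ p.1 p.2)^2 + a p.2 * (deriv (φ p.1) p.2)^2
      + (deriv (fun τ => φ τ p.2) p.1)^2) (QT T)

/-- Weak solution of `v_t + (a v_x)_x = 0` with Neumann boundary conditions. -/
def WeakSolDiv (a : ℝ → ℝ) (x₀ T : ℝ) (wk : Bool) (v : ℝ → ℝ → ℝ) : Prop :=
  (∀ t ∈ Icc (0:ℝ) T, MemH1a a (v t) x₀ wk) ∧
  IntegrableOn (fun p : ℝ × ℝ =>
    (v p.1 p.2)^2 + a p.2 * (deriv (v p.1) p.2)^2) (QT T) ∧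
  ∀ φ : ℝ → ℝ → ℝ, TestClassDiv a x₀ T wk φ →
    (∫ x in Ioo (0:ℝ) 1, v T x * φ T x) - (∫ x in Ioo (0:ℝ) 1, v 0 x * φ 0 x)
      - (∫ t in Ioo (0:ℝ) T, ∫ x in Ioo (0:ℝ) 1, v t x * deriv (fun τ => φ τ x) t)
      = ∫ t in Ioo (0:ℝ) T, ∫ x in Ioo (0:ℝ) 1, a x * deriv (v t) x * deriv (φ t) x

/-- Test function class `H¹(0,T; L²_{1/a}(0,1)) ∩ L²(0,T; H¹_{1/a}(0,1))` for the weak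
formulation in non-divergence form. -/
def TestClassNonDiv (a : ℝ → ℝ) (T : ℝ) (φ : ℝ → ℝ → ℝ) : Prop :=
  (∀ t ∈ Icc (0:ℝ) T, MemH1inva a (φ t)) ∧
  IntegrableOn (fun p : ℝ × ℝ =>
    (φ p.1 p.2)^2 / a p.2 + (deriv (φ p.1) p.2)^2
      + (deriv (fun τ => φ τ p.2) p.1)^2 / a p.2) (QT T)

/-- Weak solution of `v_t + a v_xx = 0` with Neumann boundary conditions. -/
def WeakSolNonDiv (a : ℝ → ℝ) (T : ℝ) (v : ℝ → ℝ → ℝ) : Prop :=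
  (∀ t ∈ Icc (0:ℝ) T, MemH1inva a (v t)) ∧
  IntegrableOn (fun p : ℝ × ℝ =>
    (v p.1 p.2)^2 / a p.2 + (deriv (v p.1) p.2)^2) (QT T) ∧
  ∀ φ : ℝ → ℝ → ℝ, TestClassNonDiv a T φ →
    (∫ x in Ioo (0:ℝ) 1, v T x * φ T x / a x) - (∫ x in Ioo (0:ℝ) 1, v 0 x * φ 0 x / a x)
      - (∫ t in Ioo (0:ℝ) T, ∫ x in Ioo (0:ℝ) 1, v t x * deriv (fun τ => φ τ x) t / a x)
      = ∫ t in Ioo (0:ℝ) T, ∫ x in Ioo (0:ℝ) 1, deriv (v t) x * deriv (φ t) x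

end

namespace S10

lemma acon_ii {u : ℝ → ℝ} (h : ACOn u 0 1) {c d : ℝ} (hc : c ∈ Icc (0:ℝ) 1)
    (hd : d ∈ Icc (0:ℝ) 1) : IntervalIntegrable (deriv u) volume c d :=
  h.1.mono_set (by rw [uIcc_of_le (zero_le_one)]; exact uIcc_subset_Icc hc hd)

lemma acon_sub_int {u : ℝ → ℝ} (h : ACOn u 0 1) {c d : ℝ} (hc : c ∈ Icc (0:ℝ) 1)
    (hd : d ∈ Icc (0:ℝ) 1) : u d - u c = ∫ t in c..d, deriv u t := by
  rw [h.2 d hd, h.2 c hc]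
  have h1 : IntervalIntegrable (deriv u) volume 0 d := acon_ii h ⟨le_refl 0, zero_le_one⟩ hd
  have h2 : IntervalIntegrable (deriv u) volume 0 c := acon_ii h ⟨le_refl 0, zero_le_one⟩ hc
  have := intervalIntegral.integral_interval_sub_left h1 h2
  linarith [this]

lemma acon_cont {u : ℝ → ℝ} (h : ACOn u 0 1) : ContinuousOn u (Icc 0 1) := by
  have h0 : (0:ℝ) ∈ uIcc (0:ℝ) 1 := left_mem_uIcc
  have := intervalIntegral.continuousOn_primitive_interval' h.1 h0
  rw [uIcc_of_le zero_le_one] at this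
  exact (continuousOn_const.add this).congr h.2

/-- Cauchy–Schwarz for interval integrals. -/
lemma sq_intInt_le {f : ℝ → ℝ} {c d : ℝ} (hcd : c ≤ d)
    (h1 : IntervalIntegrable f volume c d)
    (h2 : IntegrableOn (fun x => f x ^ 2) (Ioc c d)) :
    (∫ t in c..d, f t) ^ 2 ≤ (d - c) * ∫ t in Ioc c d, f t ^ 2 := by
  set μ := volume.restrict (Ioc c d) with hμ
  have hfint : Integrable f μ := (intervalIntegrable_iff_integrableOn_Ioc_of_le hcd).1 h1
  have hfa : AEStronglyMeasurable (fun x => |f x|) μ := hfint.abs.1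
  have hmem : MemLp (fun x => |f x|) 2 μ := by
    rw [memLp_two_iff_integrable_sq hfa]
    simp only [sq_abs]
    exact h2
  have hmem1 : MemLp (fun _ : ℝ => (1:ℝ)) 2 μ := memLp_const 1
  have hpq : (2:ℝ).HolderConjugate 2 := Real.HolderConjugate.two_two
  have hof : ENNReal.ofReal (2:ℝ) = 2 := by norm_num [ENNReal.ofReal_ofNat]
  have hC := integral_mul_le_Lp_mul_Lq_of_nonneg hpq
      (Eventually.of_forall (fun x => abs_nonneg (f x)))
      (Eventually.of_forall (fun _ => zero_le_one)) (hof ▸ hmem) (hof ▸ hmem1)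
  simp only [mul_one, Real.one_rpow] at hC
  have hμv : ∫ _ : ℝ, (1:ℝ) ∂μ = d - c := by
    simp [hμ, Real.volume_Ioc, ENNReal.toReal_ofReal (by linarith : (0:ℝ) ≤ d - c), hcd]
  rw [hμv] at hC
  have habs2 : ∫ a, |f a| ^ (2:ℝ) ∂μ = ∫ t in Ioc c d, f t ^ 2 := by
    rw [hμ]; apply setIntegral_congr_fun measurableSet_Ioc
    intro x _
    show |f x| ^ (2:ℝ) = f x ^ 2
    rw [show ((2:ℝ)) = ((2:ℕ):ℝ) by norm_num, Real.rpow_natCast, sq_abs]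
  rw [habs2] at hC
  have hIn : 0 ≤ ∫ t in Ioc c d, f t ^ 2 :=
    setIntegral_nonneg measurableSet_Ioc fun x _ => sq_nonneg _
  have h3 : |∫ t in c..d, f t| ≤ ∫ a, |f a| ∂μ := by
    rw [intervalIntegral.integral_of_le hcd]
    simpa [Real.norm_eq_abs] using norm_integral_le_integral_norm (μ := μ) f
  have h4 : (∫ t in c..d, f t) ^ 2 ≤ (∫ a, |f a| ∂μ) ^ 2 := by
    rw [← sq_abs]
    exact pow_le_pow_left₀ (abs_nonneg _) h3 2
  calc (∫ t in c..d, f t) ^ 2 ≤ (∫ a, |f a| ∂μ) ^ 2 := h4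
    _ ≤ ((∫ t in Ioc c d, f t ^ 2) ^ (1/(2:ℝ)) * (d - c) ^ (1/(2:ℝ))) ^ 2 := by
        apply pow_le_pow_left₀ (integral_nonneg fun x => abs_nonneg _) hC
    _ = (d - c) * ∫ t in Ioc c d, f t ^ 2 := by
        rw [mul_pow, ← Real.rpow_natCast ((∫ t in Ioc c d, f t ^ 2) ^ (1/(2:ℝ))) 2,
          ← Real.rpow_natCast ((d - c) ^ (1/(2:ℝ))) 2,
          ← Real.rpow_mul hIn, ← Real.rpow_mul (by linarith)]
        norm_num [mul_comm]

lemma lower_right {a : ℝ → ℝ} {x₀ K : ℝ} (hACa : ACOn a 0 1)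
    (hx₀ : x₀ ∈ Ioo (0:ℝ) 1) (hK : 0 ≤ K)
    (hae : ∀ᵐ t ∂(volume.restrict (Icc (0:ℝ) 1)), (t - x₀) * deriv a t ≤ K * a t)
    {x : ℝ} (hx : x ∈ Ioo x₀ 1) :
    a 1 * (1 - x₀) ^ (-K) * (x - x₀) ^ K ≤ a x := by
  obtain ⟨hxx₀, hx1⟩ := hx
  have hx₀0 : (0:ℝ) < x₀ := hx₀.1
  have hx01 : x ∈ Icc (0:ℝ) 1 := ⟨le_of_lt (lt_trans hx₀0 hxx₀), hx1.le⟩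
  have hone : (1:ℝ) ∈ Icc (0:ℝ) 1 := ⟨zero_le_one, le_rfl⟩
  have acont : ContinuousOn a (Icc 0 1) := acon_cont hACa
  set g : ℝ → ℝ := fun t => K / (t - x₀) with hg
  have hIccsub : Icc x 1 ⊆ Icc (0:ℝ) 1 := Icc_subset_Icc hx01.1 le_rfl
  have hgc : ContinuousOn g (Icc x 1) := by
    apply continuousOn_const.div ((continuous_id.sub continuous_const).continuousOn)
    intro t ht
    exact sub_ne_zero.2 (ne_of_gt (lt_of_lt_of_le hxx₀ ht.1))
  have hgac : ContinuousOn (fun t => g t * a t) (Icc x 1) := hgc.mul (acont.mono hIccsub)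
  have hga_int : ∀ y ∈ Icc x 1, IntervalIntegrable (fun t => g t * a t) volume x y := by
    intro y hy
    apply ContinuousOn.intervalIntegrable
    apply hgac.mono
    rw [uIcc_of_le hy.1]
    exact Icc_subset_Icc le_rfl hy.2
  set u : ℝ → ℝ := fun y => a x + ∫ t in x..y, g t * a t with hu
  -- a.e. bound
  have hae2 : ∀ᵐ t ∂(volume.restrict (Icc x 1)), deriv a t ≤ g t * a t := by
    have h1 : ∀ᵐ t ∂(volume.restrict (Icc x 1)), (t - x₀) * deriv a t ≤ K * a t :=
      ae_restrict_of_ae_restrict_of_subset hIccsub hae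
    filter_upwards [h1, ae_restrict_mem measurableSet_Icc] with t ht hmem
    have hpos : 0 < t - x₀ := sub_pos.2 (lt_of_lt_of_le hxx₀ hmem.1)
    have : deriv a t ≤ K * a t / (t - x₀) := by
      rw [le_div_iff₀ hpos]; linarith [ht]
    calc deriv a t ≤ K * a t / (t - x₀) := this
      _ = g t * a t := by rw [hg]; ring
  have hau : ∀ y ∈ Icc x 1, a y ≤ u y := by
    intro y hy
    have hy01 : y ∈ Icc (0:ℝ) 1 := hIccsub hy
    have hsub : a y - a x = ∫ t in x..y, deriv a t := acon_sub_int hACa hx01 hy01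
    have hmono : (∫ t in x..y, deriv a t) ≤ ∫ t in x..y, g t * a t := by
      apply intervalIntegral.integral_mono_ae_restrict hy.1 (acon_ii hACa hx01 hy01)
        (hga_int y hy)
      exact ae_restrict_of_ae_restrict_of_subset (Icc_subset_Icc le_rfl hy.2) hae2
    have := hsub.le.trans hmono
    simp only [hu]; linarith
  have hu_cont : ContinuousOn u (Icc x 1) := by
    apply continuousOn_const.add
    have := intervalIntegral.continuousOn_primitive_interval'
      (hga_int 1 (right_mem_Icc.2 hx1.le)) left_mem_uIcc
    rwa [uIcc_of_le hx1.le] at this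
  have hu_deriv : ∀ y ∈ Ioo x 1, HasDerivAt u (g y * a y) y := by
    intro y hy
    apply HasDerivAt.const_add
    have hyU : y ∈ Ioo x₀ 1 := ⟨lt_trans hxx₀ hy.1, hy.2⟩
    have hUopen : IsOpen (Ioo x₀ (1:ℝ)) := isOpen_Ioo
    have hgaU : ContinuousOn (fun t => g t * a t) (Ioo x₀ 1) := by
      apply ContinuousOn.mul
      · apply continuousOn_const.div ((continuous_id.sub continuous_const).continuousOn)
        intro t ht; exact sub_ne_zero.2 (ne_of_gt ht.1)
      · exact acont.mono (fun t ht => ⟨le_of_lt (lt_trans hx₀0 ht.1), ht.2.le⟩)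
    exact intervalIntegral.integral_hasDerivAt_right
      (hga_int y ⟨hy.1.le, hy.2.le⟩)
      (hgaU.stronglyMeasurableAtFilter hUopen y hyU)
      ((hgaU y hyU).continuousAt (hUopen.mem_nhds hyU))
  set φ : ℝ → ℝ := fun y => u y * (y - x₀) ^ (-K) with hφ
  have hφ_deriv : ∀ y ∈ Ioo x 1, HasDerivAt φ
      (g y * a y * (y - x₀) ^ (-K) + u y * (1 * -K * (y - x₀) ^ (-K - 1))) y := by
    intro y hy
    have hpos : (0:ℝ) < y - x₀ := sub_pos.2 (lt_trans hxx₀ hy.1)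
    exact (hu_deriv y hy).mul
      (((hasDerivAt_id y).sub_const x₀).rpow_const (Or.inl (ne_of_gt hpos)))
  have hkey : ∀ y ∈ Ioo x 1,
      g y * a y * (y - x₀) ^ (-K) + u y * (1 * -K * (y - x₀) ^ (-K - 1)) ≤ 0 := by
    intro y hy
    have hpos : (0:ℝ) < y - x₀ := sub_pos.2 (lt_trans hxx₀ hy.1)
    have hrw : (y - x₀) ^ (-K) = (y - x₀) ^ (-K - 1) * (y - x₀) := by
      rw [← Real.rpow_add_one (ne_of_gt hpos) (-K - 1)]
      congr 1; ring
    have heq : g y * a y * (y - x₀) ^ (-K) + u y * (1 * -K * (y - x₀) ^ (-K - 1))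
        = K * (y - x₀) ^ (-K - 1) * (a y - u y) := by
      rw [hrw, hg]; field_simp; ring
    rw [heq]
    apply mul_nonpos_of_nonneg_of_nonpos
    · exact mul_nonneg hK (Real.rpow_nonneg hpos.le _)
    · have := hau y ⟨hy.1.le, hy.2.le⟩; linarith
  have hφ_cont : ContinuousOn φ (Icc x 1) := by
    apply hu_cont.mul
    apply ContinuousOn.rpow_const ((continuous_id.sub continuous_const).continuousOn)
    intro y hy
    exact Or.inl (sub_ne_zero.2 (ne_of_gt (lt_of_lt_of_le hxx₀ hy.1)))
  have hant : AntitoneOn φ (Icc x 1) := by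
    apply antitoneOn_of_deriv_nonpos (convex_Icc x 1) hφ_cont
    · intro y hy
      rw [interior_Icc] at hy
      exact (hφ_deriv y hy).differentiableAt.differentiableWithinAt
    · intro y hy
      rw [interior_Icc] at hy
      rw [(hφ_deriv y hy).deriv]
      exact hkey y hy
  have h1le : φ 1 ≤ φ x := hant (left_mem_Icc.2 hx1.le) (right_mem_Icc.2 hx1.le) hx1.le
  have hφx : φ x = a x * (x - x₀) ^ (-K) := by
    simp [hφ, hu, intervalIntegral.integral_same]
  have hwpos : (0:ℝ) < (1 - x₀) ^ (-K) := Real.rpow_pos_of_pos (by linarith [hx₀.2]) _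
  have hlow : a 1 * (1 - x₀) ^ (-K) ≤ φ 1 := by
    have := hau 1 (right_mem_Icc.2 hx1.le)
    exact mul_le_mul_of_nonneg_right this hwpos.le
  have hmain : a 1 * (1 - x₀) ^ (-K) ≤ a x * (x - x₀) ^ (-K) := by
    rw [← hφx]; exact hlow.trans h1le
  have hxpos : (0:ℝ) < x - x₀ := sub_pos.2 hxx₀
  have := mul_le_mul_of_nonneg_right hmain (Real.rpow_nonneg hxpos.le K)
  calc a 1 * (1 - x₀) ^ (-K) * (x - x₀) ^ K
      ≤ a x * (x - x₀) ^ (-K) * (x - x₀) ^ K := this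
    _ = a x := by
        rw [mul_assoc, ← Real.rpow_add hxpos]
        simp
lemma lower_left {a : ℝ → ℝ} {x₀ K : ℝ} (hACa : ACOn a 0 1)
    (hx₀ : x₀ ∈ Ioo (0:ℝ) 1) (hK : 0 ≤ K)
    (hae : ∀ᵐ t ∂(volume.restrict (Icc (0:ℝ) 1)), (t - x₀) * deriv a t ≤ K * a t)
    {x : ℝ} (hx : x ∈ Ioo 0 x₀) :
    a 0 * x₀ ^ (-K) * (x₀ - x) ^ K ≤ a x := by
  obtain ⟨hx0, hxx₀⟩ := hx
  have hx₀1 : x₀ < 1 := hx₀.2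
  have hx01 : x ∈ Icc (0:ℝ) 1 := ⟨hx0.le, le_of_lt (lt_trans hxx₀ hx₀1)⟩
  have hzero : (0:ℝ) ∈ Icc (0:ℝ) 1 := ⟨le_rfl, zero_le_one⟩
  have acont : ContinuousOn a (Icc 0 1) := acon_cont hACa
  set g : ℝ → ℝ := fun t => K / (x₀ - t) with hg
  have hIccsub : Icc (0:ℝ) x ⊆ Icc (0:ℝ) 1 := Icc_subset_Icc le_rfl hx01.2
  have hgac : ContinuousOn (fun t => g t * a t) (Icc 0 x) := by
    apply ContinuousOn.mul
    · apply continuousOn_const.div ((continuous_const.sub continuous_id).continuousOn)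
      intro t ht
      exact sub_ne_zero.2 (ne_of_gt (lt_of_le_of_lt ht.2 hxx₀))
    · exact acont.mono hIccsub
  have hga_int0 : IntervalIntegrable (fun t => g t * a t) volume 0 x := by
    apply ContinuousOn.intervalIntegrable
    rwa [uIcc_of_le hx0.le]
  have hga_int : ∀ y ∈ Icc (0:ℝ) x, IntervalIntegrable (fun t => g t * a t) volume x y := by
    intro y hy
    apply hga_int0.symm.mono_set
    rw [uIcc_of_ge hy.2, uIcc_of_ge hx0.le]
    exact Icc_subset_Icc hy.1 le_rfl
  set v : ℝ → ℝ := fun y => a x - ∫ t in x..y, g t * a t with hv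
  have hae2 : ∀ᵐ t ∂(volume.restrict (Icc (0:ℝ) x)), -(g t * a t) ≤ deriv a t := by
    have h1 : ∀ᵐ t ∂(volume.restrict (Icc (0:ℝ) x)), (t - x₀) * deriv a t ≤ K * a t :=
      ae_restrict_of_ae_restrict_of_subset hIccsub hae
    filter_upwards [h1, ae_restrict_mem measurableSet_Icc] with t ht hmem
    have hneg : t - x₀ < 0 := sub_neg.2 (lt_of_le_of_lt hmem.2 hxx₀)
    have h2 : K * a t / (t - x₀) ≤ deriv a t := by
      rw [div_le_iff_of_neg hneg]; linarith [ht]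
    have h3 : -(g t * a t) = K * a t / (t - x₀) := by
      have hne : x₀ - t ≠ 0 := ne_of_gt (by linarith)
      rw [hg, eq_div_iff (ne_of_lt hneg)]
      field_simp
      ring
    linarith [h3 ▸ h2]
  have hav : ∀ y ∈ Icc (0:ℝ) x, a y ≤ v y := by
    intro y hy
    have hy01 : y ∈ Icc (0:ℝ) 1 := hIccsub hy
    have hsub : a x - a y = ∫ t in y..x, deriv a t := acon_sub_int hACa hy01 hx01
    have hint_y : IntervalIntegrable (fun t => g t * a t) volume y x := by
      apply hga_int0.mono_set
      rw [uIcc_of_le hy.2, uIcc_of_le hx0.le]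
      exact Icc_subset_Icc hy.1 le_rfl
    have hmono : (∫ t in y..x, -(g t * a t)) ≤ ∫ t in y..x, deriv a t := by
      apply intervalIntegral.integral_mono_ae_restrict hy.2 hint_y.neg
        (acon_ii hACa hy01 hx01)
      exact ae_restrict_of_ae_restrict_of_subset (Icc_subset_Icc hy.1 le_rfl) hae2
    rw [intervalIntegral.integral_neg] at hmono
    have hsymm : (∫ t in x..y, g t * a t) = -∫ t in y..x, g t * a t :=
      intervalIntegral.integral_symm y x
    simp only [hv]
    linarith
  have hv_cont : ContinuousOn v (Icc 0 x) := by
    apply continuousOn_const.sub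
    have := intervalIntegral.continuousOn_primitive_interval' hga_int0
      (by rw [uIcc_of_le hx0.le]; exact right_mem_Icc.2 hx0.le)
    rwa [uIcc_of_le hx0.le] at this
  have hUopen : IsOpen (Ioo (0:ℝ) x₀) := isOpen_Ioo
  have hgaU : ContinuousOn (fun t => g t * a t) (Ioo 0 x₀) := by
    apply ContinuousOn.mul
    · apply continuousOn_const.div ((continuous_const.sub continuous_id).continuousOn)
      intro t ht; exact sub_ne_zero.2 (ne_of_gt ht.2)
    · exact acont.mono (fun t ht => ⟨ht.1.le, le_of_lt (lt_trans ht.2 hx₀1)⟩)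
  have hv_deriv : ∀ y ∈ Ioo (0:ℝ) x, HasDerivAt v (-(g y * a y)) y := by
    intro y hy
    apply HasDerivAt.const_sub
    have hyU : y ∈ Ioo (0:ℝ) x₀ := ⟨hy.1, lt_trans hy.2 hxx₀⟩
    exact intervalIntegral.integral_hasDerivAt_right
      (hga_int y ⟨hy.1.le, hy.2.le⟩)
      (hgaU.stronglyMeasurableAtFilter hUopen y hyU)
      ((hgaU y hyU).continuousAt (hUopen.mem_nhds hyU))
  set χ : ℝ → ℝ := fun y => v y * (x₀ - y) ^ (-K) with hχ
  have hχ_deriv : ∀ y ∈ Ioo (0:ℝ) x, HasDerivAt χ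
      (-(g y * a y) * (x₀ - y) ^ (-K) + v y * (-1 * -K * (x₀ - y) ^ (-K - 1))) y := by
    intro y hy
    have hpos : (0:ℝ) < x₀ - y := sub_pos.2 (lt_trans hy.2 hxx₀)
    exact (hv_deriv y hy).mul
      (((hasDerivAt_id y).const_sub x₀).rpow_const (Or.inl (ne_of_gt hpos)))
  have hkey : ∀ y ∈ Ioo (0:ℝ) x,
      0 ≤ -(g y * a y) * (x₀ - y) ^ (-K) + v y * (-1 * -K * (x₀ - y) ^ (-K - 1)) := by
    intro y hy
    have hpos : (0:ℝ) < x₀ - y := sub_pos.2 (lt_trans hy.2 hxx₀)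
    have hrw : (x₀ - y) ^ (-K) = (x₀ - y) ^ (-K - 1) * (x₀ - y) := by
      rw [← Real.rpow_add_one (ne_of_gt hpos) (-K - 1)]
      congr 1; ring
    have heq : -(g y * a y) * (x₀ - y) ^ (-K) + v y * (-1 * -K * (x₀ - y) ^ (-K - 1))
        = K * (x₀ - y) ^ (-K - 1) * (v y - a y) := by
      rw [hrw, hg]; field_simp; ring
    rw [heq]
    apply mul_nonneg
    · exact mul_nonneg hK (Real.rpow_nonneg hpos.le _)
    · have := hav y ⟨hy.1.le, hy.2.le⟩; linarith
  have hχ_cont : ContinuousOn χ (Icc 0 x) := by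
    apply hv_cont.mul
    apply ContinuousOn.rpow_const ((continuous_const.sub continuous_id).continuousOn)
    intro y hy
    exact Or.inl (sub_ne_zero.2 (ne_of_gt (lt_of_le_of_lt hy.2 hxx₀)))
  have hmon : MonotoneOn χ (Icc 0 x) := by
    apply monotoneOn_of_deriv_nonneg (convex_Icc 0 x) hχ_cont
    · intro y hy
      rw [interior_Icc] at hy
      exact (hχ_deriv y hy).differentiableAt.differentiableWithinAt
    · intro y hy
      rw [interior_Icc] at hy
      rw [(hχ_deriv y hy).deriv]
      exact hkey y hy
  have h0le : χ 0 ≤ χ x := hmon (left_mem_Icc.2 hx0.le) (right_mem_Icc.2 hx0.le) hx0.le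
  have hχx : χ x = a x * (x₀ - x) ^ (-K) := by
    simp [hχ, hv, intervalIntegral.integral_same]
  have hwpos : (0:ℝ) < (x₀ - 0) ^ (-K) := Real.rpow_pos_of_pos (by linarith [hx₀.1]) _
  have hlow : a 0 * x₀ ^ (-K) ≤ χ 0 := by
    have h := hav 0 (left_mem_Icc.2 hx0.le)
    have := mul_le_mul_of_nonneg_right h hwpos.le
    simpa [hχ] using this
  have hmain : a 0 * x₀ ^ (-K) ≤ a x * (x₀ - x) ^ (-K) := by
    rw [← hχx]; exact hlow.trans h0le
  have hxpos : (0:ℝ) < x₀ - x := sub_pos.2 hxx₀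
  have := mul_le_mul_of_nonneg_right hmain (Real.rpow_nonneg hxpos.le K)
  calc a 0 * x₀ ^ (-K) * (x₀ - x) ^ K
      ≤ a x * (x₀ - x) ^ (-K) * (x₀ - x) ^ K := this
    _ = a x := by
        rw [mul_assoc, ← Real.rpow_add hxpos]
        simp
lemma rpow_cancel {b p : ℝ} (q : ℝ) (hp : 0 < p) : b * p ^ (-q) * p ^ q = b := by
  rw [mul_assoc, ← Real.rpow_add hp]
  simp

lemma lower_bound {a : ℝ → ℝ} {x₀ K : ℝ} (hACa : ACOn a 0 1)
    (hx₀ : x₀ ∈ Ioo (0:ℝ) 1) (hK : 0 ≤ K) (hKne : K ≠ 0) (ha0 : a x₀ = 0)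
    (hpos : ∀ x ∈ Icc (0:ℝ) 1, x ≠ x₀ → 0 < a x)
    (hae : ∀ᵐ t ∂(volume.restrict (Icc (0:ℝ) 1)), (t - x₀) * deriv a t ≤ K * a t) :
    ∃ c > 0, ∀ x ∈ Icc (0:ℝ) 1, c * |x - x₀| ^ K ≤ a x := by
  have h1x₀ : (0:ℝ) < 1 - x₀ := by linarith [hx₀.2]
  have hc₁ : 0 < a 1 * (1 - x₀) ^ (-K) :=
    mul_pos (hpos 1 ⟨zero_le_one, le_rfl⟩ (ne_of_gt hx₀.2)) (Real.rpow_pos_of_pos h1x₀ _)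
  have hc₂ : 0 < a 0 * x₀ ^ (-K) :=
    mul_pos (hpos 0 ⟨le_rfl, zero_le_one⟩ (ne_of_lt hx₀.1)) (Real.rpow_pos_of_pos hx₀.1 _)
  refine ⟨min (a 1 * (1 - x₀) ^ (-K)) (a 0 * x₀ ^ (-K)), lt_min hc₁ hc₂, ?_⟩
  intro x hx
  rcases lt_trichotomy x x₀ with hlt | heq | hgt
  · -- x < x₀
    have habs : |x - x₀| = x₀ - x := by rw [abs_of_neg (by linarith)]; ring
    rw [habs]
    have hcle : min (a 1 * (1 - x₀) ^ (-K)) (a 0 * x₀ ^ (-K)) * (x₀ - x) ^ K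
        ≤ a 0 * x₀ ^ (-K) * (x₀ - x) ^ K :=
      mul_le_mul_of_nonneg_right (min_le_right _ _) (Real.rpow_nonneg (by linarith) _)
    refine hcle.trans ?_
    rcases eq_or_lt_of_le hx.1 with h0 | h0
    · rw [← h0, sub_zero, rpow_cancel K hx₀.1]
    · exact lower_left hACa hx₀ hK hae ⟨h0, hlt⟩
  · rw [heq, ha0, sub_self, abs_zero, Real.zero_rpow hKne, mul_zero]
  · -- x₀ < x
    have habs : |x - x₀| = x - x₀ := abs_of_pos (by linarith)
    rw [habs]
    have hcle : min (a 1 * (1 - x₀) ^ (-K)) (a 0 * x₀ ^ (-K)) * (x - x₀) ^ K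
        ≤ a 1 * (1 - x₀) ^ (-K) * (x - x₀) ^ K :=
      mul_le_mul_of_nonneg_right (min_le_left _ _) (Real.rpow_nonneg (by linarith) _)
    refine hcle.trans ?_
    rcases eq_or_lt_of_le hx.2 with h1 | h1
    · rw [h1, rpow_cancel K h1x₀]
    · exact lower_right hACa hx₀ hK hae ⟨hgt, h1⟩

lemma upper_bound {a : ℝ → ℝ} {x₀ M : ℝ} (hACa : ACOn a 0 1)
    (hx₀ : x₀ ∈ Icc (0:ℝ) 1) (ha0 : a x₀ = 0) (hM0 : 0 ≤ M)
    (hM : ∀ᵐ t ∂(volume.restrict (Icc (0:ℝ) 1)), |deriv a t| ≤ M) :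
    ∀ x ∈ Icc (0:ℝ) 1, a x ≤ M * |x - x₀| := by
  intro x hx
  have hsub : a x - a x₀ = ∫ t in x₀..x, deriv a t := acon_sub_int hACa hx₀ hx
  have hsubset : Set.uIoc x₀ x ⊆ Icc (0:ℝ) 1 := by
    have hx₀' : x₀ ∈ uIcc (0:ℝ) 1 := by rw [uIcc_of_le zero_le_one]; exact hx₀
    have hx' : x ∈ uIcc (0:ℝ) 1 := by rw [uIcc_of_le zero_le_one]; exact hx
    refine subset_trans uIoc_subset_uIcc ?_
    refine (uIcc_subset_uIcc hx₀' hx').trans ?_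
    rw [uIcc_of_le (zero_le_one : (0:ℝ) ≤ 1)]
  have hbd : ∀ᵐ t ∂(volume.restrict (Set.uIoc x₀ x)), ‖deriv a t‖ ≤ M :=
    ae_restrict_of_ae_restrict_of_subset hsubset hM
  have h := intervalIntegral.norm_integral_le_of_norm_le_const_ae
    ((ae_restrict_iff' measurableSet_uIoc).1 hbd)
  calc a x ≤ |a x| := le_abs_self _
    _ = ‖∫ t in x₀..x, deriv a t‖ := by rw [← hsub, ha0, sub_zero, Real.norm_eq_abs]
    _ ≤ |(x - x₀) * M| := by rw [abs_mul, abs_of_nonneg hM0, mul_comm]; exact h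
    _ = M * |x - x₀| := by rw [abs_mul, abs_of_nonneg hM0, mul_comm]

lemma weight_int {x₀ r : ℝ} (hx₀ : x₀ ∈ Ioo (0:ℝ) 1) (hr : -1 < r) :
    IntegrableOn (fun x => |x - x₀| ^ r) (Ioo (0:ℝ) 1) := by
  have hcore : IntervalIntegrable (fun t : ℝ => t ^ r) volume 0 (1 - x₀) :=
    intervalIntegral.intervalIntegrable_rpow' hr
  -- right piece on Icc x₀ 1
  have hright0 : IntervalIntegrable (fun x : ℝ => (x - x₀) ^ r) volume x₀ 1 := by
    have := hcore.comp_sub_right x₀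
    simpa using this
  have hright1 : IntegrableOn (fun x : ℝ => (x - x₀) ^ r) (Ioc x₀ 1) :=
    (intervalIntegrable_iff_integrableOn_Ioc_of_le hx₀.2.le).1 hright0
  have hright : IntegrableOn (fun x => |x - x₀| ^ r) (Ioc x₀ 1) := by
    apply hright1.congr_fun ?_ measurableSet_Ioc
    intro x hxm
    simp [abs_of_pos (sub_pos.2 hxm.1)]
  -- left piece on Ioo 0 x₀
  have hcore2 : IntervalIntegrable (fun t : ℝ => t ^ r) volume 0 x₀ :=
    intervalIntegral.intervalIntegrable_rpow' hr
  have hleft0 : IntervalIntegrable (fun x : ℝ => (x₀ - x) ^ r) volume 0 x₀ := by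
    have := (hcore2.comp_sub_left x₀).symm
    simpa using this
  have hleft1 : IntegrableOn (fun x : ℝ => (x₀ - x) ^ r) (Ioo 0 x₀) :=
    (intervalIntegrable_iff_integrableOn_Ioo_of_le hx₀.1.le).1 hleft0
  have hleft : IntegrableOn (fun x => |x - x₀| ^ r) (Ioo 0 x₀) := by
    apply hleft1.congr_fun ?_ measurableSet_Ioo
    intro x hxm
    show (x₀ - x) ^ r = |x - x₀| ^ r
    rw [abs_of_neg (sub_neg.2 hxm.2), neg_sub]
  have hrightIcc : IntegrableOn (fun x => |x - x₀| ^ r) (Icc x₀ 1) :=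
    hright.congr_set_ae (Ioc_ae_eq_Icc).symm
  have hunion : IntegrableOn (fun x => |x - x₀| ^ r) (Ioo 0 x₀ ∪ Icc x₀ 1) :=
    hleft.union hrightIcc
  apply hunion.mono_set
  intro x hxm
  rcases le_or_gt x₀ x with h | h
  · exact Or.inr ⟨h, hxm.2.le⟩
  · exact Or.inl ⟨hxm.1, h⟩

lemma vanish {a u : ℝ → ℝ} {x₀ M : ℝ} (hx₀ : x₀ ∈ Ioo (0:ℝ) 1)
    (hpos : ∀ x ∈ Icc (0:ℝ) 1, x ≠ x₀ → 0 < a x)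
    (hMpos : 0 < M) (hub : ∀ x ∈ Icc (0:ℝ) 1, a x ≤ M * |x - x₀|)
    (hu : MemH1inva a u) : u x₀ = 0 := by
  by_contra hne
  set c₀ := u x₀ ^ 2 with hc₀def
  have hc₀ : 0 < c₀ := by positivity
  have hx₀m : x₀ ∈ Icc (0:ℝ) 1 := ⟨hx₀.1.le, hx₀.2.le⟩
  have hcont : ContinuousOn u (Icc 0 1) := acon_cont hu.2.1
  have hca : ContinuousAt u x₀ := (hcont x₀ hx₀m).continuousAt (Icc_mem_nhds hx₀.1 hx₀.2)
  have hca2 : ContinuousAt (fun x => u x ^ 2) x₀ := hca.pow 2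
  have hev : ∀ᶠ x in nhds x₀, c₀ / 2 < u x ^ 2 :=
    hca2.eventually (eventually_gt_nhds (by simp only []; linarith))
  rw [Metric.eventually_nhds_iff] at hev
  obtain ⟨δ, hδ, hball⟩ := hev
  set b := min (x₀ + δ / 2) ((x₀ + 1) / 2) with hb
  have hx₀b : x₀ < b := lt_min (by linarith) (by linarith [hx₀.2])
  have hb1 : b < 1 := lt_of_le_of_lt (min_le_right _ _) (by linarith [hx₀.2])
  have hsub : Ioo x₀ b ⊆ Ioo (0:ℝ) 1 :=
    fun x hx => ⟨lt_trans hx₀.1 hx.1, lt_trans hx.2 hb1⟩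
  have hint : IntegrableOn (fun x => u x ^ 2 / a x) (Ioo x₀ b) := hu.1.2.mono_set hsub
  have hbd : ∀ x ∈ Ioo x₀ b, (x - x₀)⁻¹ ≤ 2 * M / c₀ * (u x ^ 2 / a x) := by
    intro x hx
    have hxpos : 0 < x - x₀ := sub_pos.2 hx.1
    have hx01 : x ∈ Icc (0:ℝ) 1 := ⟨(hsub hx).1.le, (hsub hx).2.le⟩
    have hax_pos : 0 < a x := hpos x hx01 (ne_of_gt hx.1)
    have haxub : a x ≤ M * (x - x₀) := by
      have := hub x hx01; rwa [abs_of_pos hxpos] at this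
    have hu2 : c₀ / 2 ≤ u x ^ 2 := by
      refine (hball ?_).le
      rw [Real.dist_eq, abs_of_pos hxpos]
      have h1 : x < x₀ + δ / 2 := lt_of_lt_of_le hx.2 (min_le_left _ _)
      linarith
    have step1 : c₀ / 2 / (M * (x - x₀)) ≤ u x ^ 2 / a x :=
      div_le_div₀ (sq_nonneg _) hu2 hax_pos haxub
    have step2 := mul_le_mul_of_nonneg_left step1
      (le_of_lt (by positivity : (0:ℝ) < 2 * M / c₀))
    have step3 : 2 * M / c₀ * (c₀ / 2 / (M * (x - x₀))) = (x - x₀)⁻¹ := by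
      field_simp
    linarith
  have hmeas : AEStronglyMeasurable (fun x => (x - x₀)⁻¹)
      (volume.restrict (Ioo x₀ b)) :=
    ((measurable_id.sub_const x₀).inv).aestronglyMeasurable
  have hint2 : IntegrableOn (fun x => (x - x₀)⁻¹) (Ioo x₀ b) := by
    apply Integrable.mono' (hint.const_mul (2 * M / c₀)) hmeas
    filter_upwards [ae_restrict_mem measurableSet_Ioo] with x hx
    rw [Real.norm_eq_abs, abs_of_pos (inv_pos.2 (sub_pos.2 hx.1))]
    exact hbd x hx
  have hII : IntervalIntegrable (fun x => (x - x₀)⁻¹) volume x₀ b :=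
    (intervalIntegrable_iff_integrableOn_Ioo_of_le hx₀b.le).2 hint2
  rw [intervalIntegrable_sub_inv_iff] at hII
  rcases hII with h | h
  · exact absurd h (ne_of_lt hx₀b)
  · exact h left_mem_uIcc

end S10

theorem statement10 (a : ℝ → ℝ) (x₀ : ℝ) (ha : ∃ K, StronglyDeg a x₀ K) :
    (∀ u : ℝ → ℝ, MemH1inva a u → u x₀ = 0) ∧
    ∃ C > 0, ∀ u : ℝ → ℝ, MemH1inva a u →
      (∫ x in Ioo (0:ℝ) 1, (u x)^2 / a x) + (∫ x in Ioo (0:ℝ) 1, (deriv u x)^2)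
        ≤ C * ∫ x in Ioo (0:ℝ) 1, (deriv u x)^2 := by
  obtain ⟨K, ⟨hx₀, ha0, hposa, hae⟩, ⟨hACa, M₀, hM₀⟩, hK⟩ := ha
  set M := max M₀ 1 with hMdef
  have hMpos : (0:ℝ) < M := lt_of_lt_of_le one_pos (le_max_right _ _)
  have hM : ∀ᵐ t ∂(volume.restrict (Icc (0:ℝ) 1)), |deriv a t| ≤ M :=
    hM₀.mono fun x hx => hx.trans (le_max_left _ _)
  have hx₀m : x₀ ∈ Icc (0:ℝ) 1 := ⟨hx₀.1.le, hx₀.2.le⟩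
  have hub : ∀ x ∈ Icc (0:ℝ) 1, a x ≤ M * |x - x₀| :=
    S10.upper_bound hACa hx₀m ha0 hMpos.le hM
  have part1 : ∀ u : ℝ → ℝ, MemH1inva a u → u x₀ = 0 :=
    fun u hu => S10.vanish hx₀ hposa hMpos hub hu
  have hK0 : (0:ℝ) ≤ K := by linarith [hK.1]
  have hKne : K ≠ 0 := by intro h; rw [h] at hK; linarith [hK.1]
  obtain ⟨c, hc, hlow⟩ := S10.lower_bound hACa hx₀ hK0 hKne ha0 hposa hae
  have hKr : (-1:ℝ) < 1 - K := by linarith [hK.2]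
  have hJint : IntegrableOn (fun x => |x - x₀| ^ (1 - K)) (Ioo (0:ℝ) 1) :=
    S10.weight_int hx₀ hKr
  set J := ∫ x in Ioo (0:ℝ) 1, |x - x₀| ^ (1 - K) with hJdef
  have hJ : 0 ≤ J :=
    setIntegral_nonneg measurableSet_Ioo fun x _ => Real.rpow_nonneg (abs_nonneg _) _
  refine ⟨part1, J / c + 1, by positivity, ?_⟩
  intro u hu
  set I := ∫ x in Ioo (0:ℝ) 1, (deriv u x) ^ 2 with hIdef
  have hInn : 0 ≤ I := setIntegral_nonneg measurableSet_Ioo fun x _ => sq_nonneg _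
  have hux₀ : u x₀ = 0 := part1 u hu
  have hpt : ∀ x ∈ Ioo (0:ℝ) 1, u x ^ 2 / a x ≤ I / c * |x - x₀| ^ (1 - K) := by
    intro x hx
    by_cases hxx : x = x₀
    · rw [hxx, hux₀]
      have : (0:ℝ) ^ 2 / a x₀ = 0 := by simp
      rw [this]
      positivity
    · have hx01 : x ∈ Icc (0:ℝ) 1 := ⟨hx.1.le, hx.2.le⟩
      have haxpos : 0 < a x := hposa x hx01 hxx
      have habs_pos : 0 < |x - x₀| := abs_pos.2 (sub_ne_zero.2 hxx)
      have hd2nn : (0:ℝ) ≤ ∫ t in Ioo (0:ℝ) 1, (deriv u t) ^ 2 := hInn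
      have hsq : u x ^ 2 ≤ |x - x₀| * I := by
        rcases lt_or_gt_of_ne hxx with hlt | hgt
        · -- x < x₀
          have hdiff : u x₀ - u x = ∫ t in x..x₀, deriv u t :=
            S10.acon_sub_int hu.2.1 hx01 hx₀m
          have hux : u x ^ 2 = (∫ t in x..x₀, deriv u t) ^ 2 := by
            have h1 : u x = -(∫ t in x..x₀, deriv u t) := by
              rw [hux₀] at hdiff; linarith
            rw [h1, neg_sq]
          have hsubset' : Ioc x x₀ ⊆ Ioo (0:ℝ) 1 :=
            fun t ht => ⟨lt_of_le_of_lt hx.1.le ht.1, lt_of_le_of_lt ht.2 hx₀.2⟩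
          have hcs := S10.sq_intInt_le hlt.le (S10.acon_ii hu.2.1 hx01 hx₀m)
            (hu.2.2.mono_set (hsubset'.trans (fun t ht => ht)))
          have hmon : (∫ t in Ioc x x₀, (deriv u t) ^ 2) ≤ I :=
            setIntegral_mono_set hu.2.2
              (Eventually.of_forall fun t => sq_nonneg _)
              (HasSubset.Subset.eventuallyLE hsubset')
          calc u x ^ 2 = (∫ t in x..x₀, deriv u t) ^ 2 := hux
            _ ≤ (x₀ - x) * ∫ t in Ioc x x₀, (deriv u t) ^ 2 := hcs
            _ ≤ (x₀ - x) * I := by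
                apply mul_le_mul_of_nonneg_left hmon; linarith [hlt]
            _ = |x - x₀| * I := by rw [abs_of_neg (sub_neg.2 hlt), neg_sub]
        · -- x₀ < x
          have hdiff : u x - u x₀ = ∫ t in x₀..x, deriv u t :=
            S10.acon_sub_int hu.2.1 hx₀m hx01
          have hux : u x ^ 2 = (∫ t in x₀..x, deriv u t) ^ 2 := by
            have h1 : u x = ∫ t in x₀..x, deriv u t := by
              rw [hux₀] at hdiff; linarith
            rw [h1]
          have hsubset' : Ioc x₀ x ⊆ Ioo (0:ℝ) 1 :=
            fun t ht => ⟨lt_trans hx₀.1 ht.1, lt_of_le_of_lt ht.2 hx.2⟩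
          have hcs := S10.sq_intInt_le hgt.le (S10.acon_ii hu.2.1 hx₀m hx01)
            (hu.2.2.mono_set hsubset')
          have hmon : (∫ t in Ioc x₀ x, (deriv u t) ^ 2) ≤ I :=
            setIntegral_mono_set hu.2.2
              (Eventually.of_forall fun t => sq_nonneg _)
              (HasSubset.Subset.eventuallyLE hsubset')
          calc u x ^ 2 = (∫ t in x₀..x, deriv u t) ^ 2 := hux
            _ ≤ (x - x₀) * ∫ t in Ioc x₀ x, (deriv u t) ^ 2 := hcs
            _ ≤ (x - x₀) * I := by
                apply mul_le_mul_of_nonneg_left hmon; linarith [hgt]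
            _ = |x - x₀| * I := by rw [abs_of_pos (sub_pos.2 hgt)]
      have hdpos : 0 < c * |x - x₀| ^ K :=
        mul_pos hc (Real.rpow_pos_of_pos habs_pos _)
      calc u x ^ 2 / a x ≤ (|x - x₀| * I) / (c * |x - x₀| ^ K) :=
            div_le_div₀ (mul_nonneg (abs_nonneg _) hInn) hsq hdpos (hlow x hx01)
        _ = I / c * |x - x₀| ^ (1 - K) := by
            rw [Real.rpow_sub habs_pos, Real.rpow_one]
            field_simp
  have hInt1 : (∫ x in Ioo (0:ℝ) 1, u x ^ 2 / a x)
      ≤ ∫ x in Ioo (0:ℝ) 1, I / c * |x - x₀| ^ (1 - K) :=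
    setIntegral_mono_on hu.1.2 (hJint.const_mul _) measurableSet_Ioo hpt
  have hInt2 : (∫ x in Ioo (0:ℝ) 1, I / c * |x - x₀| ^ (1 - K)) = I / c * J := by
    rw [hJdef]
    exact integral_const_mul _ _
  rw [hInt2] at hInt1
  have hfin : I / c * J + I = (J / c + 1) * I := by ring
  linarith
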